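/- Assume each q_i is Lipschitz continuous and let f be the bounded fractal function. For m ∈ ℕ define the moments f_m = ∫_{x_0}^{x_N} x^m f(x) dx and Q_m = ∫_{x_0}^{x_N} x^m Q(x) dx, where Q : I → ℝ is given by Q(x) = q_i(L_i^{-1}(x)) for x ∈ I_i. Then for every m ≥ 1, f_m = (∑_{k=0}^{m−1} C(m,k) f_k ∑_{i=1}^N α_i a_i^{k+1} b_i^{m−k} + Q_m) / (1 − ∑_{i=1}^N α_i a_i^{m+1}), where C(m,k) is the binomial coefficient; the denominator is nonzero. -/

import Mathlib

open Set

noncomputable def aC (x : ℕ → ℝ) (N i : ℕ) : ℝ := (x (i + 1) - x i) / (x N - x 0)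

noncomputable def bC (x : ℕ → ℝ) (N i : ℕ) : ℝ := (x N * x i - x 0 * x (i + 1)) / (x N - x 0)

/-- The affine map `L i t = a i * t + b i`. -/
noncomputable def Lm (x : ℕ → ℝ) (N i : ℕ) (t : ℝ) : ℝ := aC x N i * t + bC x N i

/-- The inverse `L i ⁻¹ t = (t - b i) / a i` of the affine map `L i`. -/
noncomputable def LmInv (x : ℕ → ℝ) (N i : ℕ) (t : ℝ) : ℝ := (t - bC x N i) / aC x N i

open MeasureTheory

lemma xlt {N : ℕ} {x : ℕ → ℝ} (hx : ∀ i, i < N → x i < x (i + 1)) :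
    ∀ {i j}, i < j → j ≤ N → x i < x j := by
  intro i j
  induction j with
  | zero => omega
  | succ j ih =>
    intro hij hjN
    rcases Nat.lt_succ_iff_lt_or_eq.mp hij with h | h
    · exact (ih h (by omega)).trans (hx j (by omega))
    · subst h; exact hx i (by omega)

lemma xle {N : ℕ} {x : ℕ → ℝ} (hx : ∀ i, i < N → x i < x (i + 1)) :
    ∀ {i j}, i ≤ j → j ≤ N → x i ≤ x j := by
  intro i j hij hjN
  rcases eq_or_lt_of_le hij with h | h
  · subst h; exact le_rfl
  · exact (xlt hx h hjN).le

lemma exists_piece (N : ℕ) (x : ℕ → ℝ) :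
    ∀ t, x 0 ≤ t → t < x N → ∃ i < N, x i ≤ t ∧ t < x (i + 1) := by
  induction N with
  | zero => intro t h1 h2; exact absurd (h1.trans_lt h2) (lt_irrefl _)
  | succ n ih =>
    intro t h1 h2
    by_cases h : t < x n
    · obtain ⟨i, hi, h⟩ := ih t h1 h; exact ⟨i, by omega, h⟩
    · exact ⟨n, by omega, not_lt.1 h, h2⟩

/-- The fractal operator. -/
noncomputable def Tmap (N : ℕ) (x : ℕ → ℝ) (α : ℕ → ℝ) (qc : ℕ → ℝ → ℝ) (g : ℝ → ℝ) :
    ℝ → ℝ := fun t =>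
  (∑ i ∈ Finset.range N, Set.indicator (Ico (x i) (x (i + 1)))
      (fun t => α i * g (LmInv x N i t) + qc i (LmInv x N i t)) t) +
  Set.indicator {x N}
      (fun t => α (N - 1) * g (LmInv x N (N - 1) t) + qc (N - 1) (LmInv x N (N - 1) t)) t

lemma lminv_measurable (x : ℕ → ℝ) (N i : ℕ) : Measurable (LmInv x N i) :=
  (measurable_id.sub_const _).div_const _

lemma Tmap_measurable {N : ℕ} (hN : 1 ≤ N) {x : ℕ → ℝ} {α : ℕ → ℝ} {qc : ℕ → ℝ → ℝ}
    (hqc : ∀ i, i < N → Continuous (qc i)) {g : ℝ → ℝ} (hg : Measurable g) :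
    Measurable (Tmap N x α qc g) := by
  refine Measurable.add ?_ ?_
  · refine Finset.measurable_sum _ (fun i hi => ?_)
    refine Measurable.indicator ?_ measurableSet_Ico
    exact ((measurable_const.mul (hg.comp (lminv_measurable x N i))).add
      (((hqc i (Finset.mem_range.mp hi)).measurable).comp (lminv_measurable x N i)))
  · refine Measurable.indicator ?_ (measurableSet_singleton _)
    exact ((measurable_const.mul (hg.comp (lminv_measurable x N _))).add
      (((hqc _ (by omega)).measurable).comp (lminv_measurable x N _)))

section Facts
variable {N : ℕ} {x : ℕ → ℝ}

lemma hD (hN : 1 ≤ N) (hx : ∀ i, i < N → x i < x (i + 1)) : 0 < x N - x 0 :=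
  sub_pos.2 (xlt hx (by omega) le_rfl)

lemma aC_pos (hx : ∀ i, i < N → x i < x (i + 1)) {i : ℕ} (hi : i < N) : 0 < aC x N i :=
  div_pos (sub_pos.2 (hx i hi)) (hD (by omega) hx)

lemma aC_le_one (hx : ∀ i, i < N → x i < x (i + 1)) {i : ℕ} (hi : i < N) : aC x N i ≤ 1 := by
  rw [aC, div_le_one (hD (by omega) hx)]
  have h1 : x 0 ≤ x i := xle hx (by omega) (by omega)
  have h2 : x (i + 1) ≤ x N := xle hx (by omega) (by omega)
  linarith

lemma Lm_left (hx : ∀ i, i < N → x i < x (i + 1)) (hN : 1 ≤ N) (i : ℕ) :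
    Lm x N i (x 0) = x i := by
  have h := (hD hN hx).ne'
  rw [Lm, aC, bC]; field_simp; ring

lemma Lm_right (hx : ∀ i, i < N → x i < x (i + 1)) (hN : 1 ≤ N) (i : ℕ) :
    Lm x N i (x N) = x (i + 1) := by
  have h := (hD hN hx).ne'
  rw [Lm, aC, bC]; field_simp; ring

lemma Lm_LmInv (hx : ∀ i, i < N → x i < x (i + 1)) {i : ℕ} (hi : i < N) (t : ℝ) :
    Lm x N i (LmInv x N i t) = t := by
  have h := (aC_pos hx hi).ne'
  rw [Lm, LmInv]; field_simp; ring

lemma LmInv_Lm (hx : ∀ i, i < N → x i < x (i + 1)) {i : ℕ} (hi : i < N) (t : ℝ) :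
    LmInv x N i (Lm x N i t) = t := by
  have h := (aC_pos hx hi).ne'
  rw [Lm, LmInv]; field_simp; ring

lemma Lm_mem_Ico (hx : ∀ i, i < N → x i < x (i + 1)) {i : ℕ} (hi : i < N) {s : ℝ}
    (hs : s ∈ Ico (x 0) (x N)) : Lm x N i s ∈ Ico (x i) (x (i + 1)) := by
  have ha := aC_pos hx hi
  have h1 := Lm_left hx (by omega) i
  have h2 := Lm_right hx (by omega) i
  rw [Lm] at h1 h2 ⊢
  obtain ⟨hs1, hs2⟩ := hs
  constructor
  · nlinarith
  · nlinarith

lemma LmInv_mem_Icc (hx : ∀ i, i < N → x i < x (i + 1)) {i : ℕ} (hi : i < N) {t : ℝ}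
    (ht : t ∈ Icc (x i) (x (i + 1))) : LmInv x N i t ∈ Icc (x 0) (x N) := by
  have ha := aC_pos hx hi
  have h1 := Lm_left hx (by omega) i
  have h2 := Lm_right hx (by omega) i
  rw [Lm] at h1 h2
  obtain ⟨ht1, ht2⟩ := ht
  rw [LmInv]
  constructor
  · rw [le_div_iff₀ ha]; nlinarith
  · rw [div_le_iff₀ ha]; nlinarith

lemma LmInv_mem_Ico (hx : ∀ i, i < N → x i < x (i + 1)) {i : ℕ} (hi : i < N) {t : ℝ}
    (ht : t ∈ Ico (x i) (x (i + 1))) : LmInv x N i t ∈ Ico (x 0) (x N) := by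
  have ha := aC_pos hx hi
  have h1 := Lm_left hx (by omega) i
  have h2 := Lm_right hx (by omega) i
  rw [Lm] at h1 h2
  obtain ⟨ht1, ht2⟩ := ht
  rw [LmInv]
  constructor
  · rw [le_div_iff₀ ha]; nlinarith
  · rw [div_lt_iff₀ ha]; nlinarith

end Facts

section Eval
variable {N : ℕ} {x : ℕ → ℝ} {α : ℕ → ℝ} {qc : ℕ → ℝ → ℝ} {g : ℝ → ℝ}

lemma Tmap_eval (hx : ∀ i, i < N → x i < x (i + 1)) {t : ℝ} {i0 : ℕ} (hi0 : i0 < N)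
    (ht : t ∈ Ico (x i0) (x (i0 + 1))) :
    Tmap N x α qc g t = α i0 * g (LmInv x N i0 t) + qc i0 (LmInv x N i0 t) := by
  rw [Tmap]
  have hsing : t ∉ ({x N} : Set ℝ) := by
    have : t < x N := ht.2.trans_le (xle hx (by omega) le_rfl)
    simp [this.ne]
  rw [Set.indicator_of_notMem hsing, add_zero]
  rw [Finset.sum_eq_single_of_mem i0 (Finset.mem_range.mpr hi0)]
  · rw [Set.indicator_of_mem ht]
  · intro j hj hji
    refine Set.indicator_of_notMem ?_ _
    rcases lt_or_gt_of_ne hji with h | h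
    · intro hmem
      have : x (j + 1) ≤ x i0 := xle hx (by omega) (by omega)
      exact absurd (hmem.2.trans_le this) (not_lt.2 ht.1)
    · intro hmem
      have : x (i0 + 1) ≤ x j := xle hx (by omega) (Finset.mem_range.mp hj).le
      exact absurd (ht.2.trans_le this) (not_lt.2 hmem.1)

lemma Tmap_evalN (hx : ∀ i, i < N → x i < x (i + 1)) (hN : 1 ≤ N) :
    Tmap N x α qc g (x N) =
      α (N - 1) * g (LmInv x N (N - 1) (x N)) + qc (N - 1) (LmInv x N (N - 1) (x N)) := by
  rw [Tmap]
  rw [Finset.sum_eq_zero, zero_add, Set.indicator_of_mem (mem_singleton _)]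
  intro j hj
  refine Set.indicator_of_notMem ?_ _
  intro hmem
  have hjN : j < N := Finset.mem_range.mp hj
  have : x (j + 1) ≤ x N := xle hx (by omega) le_rfl
  exact absurd (hmem.2.trans_le this) (not_lt.2 le_rfl)

end Eval

lemma fractal_aemeasurable
    (N : ℕ) (hN : 2 ≤ N)
    (x : ℕ → ℝ)
    (hx : ∀ i, i < N → x i < x (i + 1))
    (α : ℕ → ℝ) (hα : ∀ i, i < N → |α i| < 1)
    (q : ℕ → ℝ → ℝ)
    (hq : ∀ i, i < N → ∃ C, ∀ u ∈ Icc (x 0) (x N), ∀ v ∈ Icc (x 0) (x N),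
      |q i u - q i v| ≤ C * |u - v|)
    (f : ℝ → ℝ)
    (hfb : ∃ M, ∀ t ∈ Icc (x 0) (x N), |f t| ≤ M)
    (hfe : ∀ i, i < N → ∀ t ∈ Ico (x 0) (x N), f (Lm x N i t) = α i * f t + q i t)
    (hfeN : f (Lm x N (N - 1) (x N)) = α (N - 1) * f (x N) + q (N - 1) (x N)) :
    AEMeasurable f (volume.restrict (Icc (x 0) (x N))) := by
  have hx0N : x 0 ≤ x N := (xlt hx (by omega) le_rfl).le
  set qc : ℕ → ℝ → ℝ := fun i t => q i (max (x 0) (min (x N) t)) with hqc_def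
  have hclamp : ∀ s ∈ Icc (x 0) (x N), max (x 0) (min (x N) s) = s := by
    intro s hs
    rw [min_eq_right hs.2, max_eq_right hs.1]
  have hqc_eq : ∀ i, ∀ s ∈ Icc (x 0) (x N), qc i s = q i s := by
    intro i s hs; simp only [hqc_def]; rw [hclamp s hs]
  have hqc_cont : ∀ i, i < N → Continuous (qc i) := by
    intro i hi
    obtain ⟨C, hC⟩ := hq i hi
    have hlip : LipschitzOnWith (Real.toNNReal (max C 0)) (q i) (Icc (x 0) (x N)) := by
      rw [lipschitzOnWith_iff_dist_le_mul]
      intro u hu v hv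
      rw [Real.dist_eq, Real.dist_eq, Real.coe_toNNReal _ (le_max_right C 0)]
      calc |q i u - q i v| ≤ C * |u - v| := hC u hu v hv
        _ ≤ max C 0 * |u - v| := by
            exact mul_le_mul_of_nonneg_right (le_max_left C 0) (abs_nonneg _)
    have hcl : Continuous fun t : ℝ => max (x 0) (min (x N) t) :=
      continuous_const.max (continuous_const.min continuous_id)
    exact (hlip.continuousOn).comp_continuous hcl
      (fun t => ⟨le_max_left _ _, max_le hx0N (min_le_left _ _)⟩)
  obtain ⟨M0, hM0⟩ := hfb
  set M : ℝ := max M0 0 with hM_def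
  have hM : ∀ t ∈ Icc (x 0) (x N), |f t| ≤ M := fun t ht => (hM0 t ht).trans (le_max_left _ _)
  have hM0' : (0:ℝ) ≤ M := le_max_right _ _
  have hne : (Finset.range N).Nonempty := ⟨0, Finset.mem_range.mpr (by omega)⟩
  set A : ℝ := (Finset.range N).sup' hne (fun i => |α i|) with hA_def
  have hA1 : A < 1 := (Finset.sup'_lt_iff hne).mpr (fun i hi => hα i (Finset.mem_range.mp hi))
  have hA0 : (0:ℝ) ≤ A :=
    le_trans (abs_nonneg (α 0)) (Finset.le_sup' (fun i => |α i|) (Finset.mem_range.mpr (show 0 < N by omega)))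
  have hAi : ∀ i, i < N → |α i| ≤ A := fun i hi =>
    Finset.le_sup' (fun i => |α i|) (Finset.mem_range.mpr hi)
  -- key structural fact
  have hkey : ∀ t ∈ Icc (x 0) (x N), ∃ j, j < N ∧ ∃ s, s ∈ Icc (x 0) (x N) ∧
      (∀ h : ℝ → ℝ, Tmap N x α qc h t = α j * h s + qc j s) ∧
      f t = α j * f s + qc j s := by
    intro t ht
    rcases lt_or_eq_of_le ht.2 with hlt | heq
    · obtain ⟨i0, hi0, h1, h2⟩ := exists_piece N x t ht.1 hlt
      have ht' : t ∈ Ico (x i0) (x (i0 + 1)) := ⟨h1, h2⟩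
      set s := LmInv x N i0 t with hs_def
      have hsIco : s ∈ Ico (x 0) (x N) := LmInv_mem_Ico hx hi0 ht'
      have hsIcc : s ∈ Icc (x 0) (x N) := ⟨hsIco.1, hsIco.2.le⟩
      refine ⟨i0, hi0, s, hsIcc, fun h => Tmap_eval hx hi0 ht', ?_⟩
      have hfe' := hfe i0 hi0 s hsIco
      rw [Lm_LmInv hx hi0] at hfe'
      rw [hqc_eq i0 s hsIcc]
      exact hfe'
    · subst heq
      have hNN : N - 1 + 1 = N := by omega
      have hLN : Lm x N (N - 1) (x N) = x N := by
        rw [Lm_right hx (by omega), hNN]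
      have hsN : LmInv x N (N - 1) (x N) = x N := by
        conv_lhs => rw [← hLN]
        rw [LmInv_Lm hx (by omega)]
      refine ⟨N - 1, by omega, x N, ⟨hx0N, le_rfl⟩, ?_, ?_⟩
      · intro h; rw [Tmap_evalN hx (by omega), hsN]
      · rw [hqc_eq _ _ ⟨hx0N, le_rfl⟩]
        rw [hLN] at hfeN
        exact hfeN
  set g : ℕ → ℝ → ℝ := fun n => (Tmap N x α qc)^[n] (fun _ => 0) with hg_def
  have hgs : ∀ n, g (n + 1) = Tmap N x α qc (g n) := by
    intro n; simp [hg_def, Function.iterate_succ_apply']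
  have hgmeas : ∀ n, Measurable (g n) := by
    intro n; induction n with
    | zero => simpa [hg_def] using measurable_const
    | succ n ih =>
      rw [hgs n]; exact Tmap_measurable (by omega) hqc_cont ih
  have hbound : ∀ n, ∀ t ∈ Icc (x 0) (x N), |g n t - f t| ≤ A ^ n * M := by
    intro n; induction n with
    | zero =>
      intro t ht
      have : g 0 t = 0 := by simp [hg_def]
      rw [this]
      simpa using hM t ht
    | succ n ih =>
      intro t ht
      obtain ⟨j, hj, s, hs, heval, hft⟩ := hkey t ht
      have h1 : g (n + 1) t = α j * g n s + qc j s := by rw [hgs n, heval]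
      rw [h1, hft]
      have h2 : α j * g n s + qc j s - (α j * f s + qc j s) = α j * (g n s - f s) := by ring
      rw [h2, abs_mul]
      calc |α j| * |g n s - f s| ≤ A * (A ^ n * M) :=
            mul_le_mul (hAi j hj) (ih s hs) (abs_nonneg _) hA0
        _ = A ^ (n + 1) * M := by ring
  refine aemeasurable_of_tendsto_metrizable_ae' (fun n => (hgmeas n).aemeasurable) ?_
  rw [ae_restrict_iff' measurableSet_Icc]
  filter_upwards with t ht
  have h0 : Filter.Tendsto (fun n => A ^ n * M) Filter.atTop (nhds 0) := by
    simpa using (tendsto_pow_atTop_nhds_zero_of_lt_one hA0 hA1).mul_const M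
  have h1 : Filter.Tendsto (fun n => g n t - f t) Filter.atTop (nhds 0) :=
    squeeze_zero_norm (fun n => hbound n t ht) h0
  have h2 := h1.add_const (f t)
  simpa using h2

lemma Qf_aux
    (N : ℕ) (hN : 2 ≤ N)
    (x : ℕ → ℝ)
    (hx : ∀ i, i < N → x i < x (i + 1))
    (q : ℕ → ℝ → ℝ)
    (hq : ∀ i, i < N → ∃ C, ∀ u ∈ Icc (x 0) (x N), ∀ v ∈ Icc (x 0) (x N),
      |q i u - q i v| ≤ C * |u - v|)
    (Qf : ℝ → ℝ)
    (hQf : ∀ i, i < N → ∀ t ∈ Ico (x i) (x (i + 1)), Qf t = q i (LmInv x N i t))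
    (hQfN : Qf (x N) = q (N - 1) (LmInv x N (N - 1) (x N))) :
    AEMeasurable Qf (volume.restrict (Icc (x 0) (x N))) ∧
      ∃ B, ∀ t ∈ Icc (x 0) (x N), |Qf t| ≤ B := by
  have hx0N : x 0 ≤ x N := (xlt hx (by omega) le_rfl).le
  set qc : ℕ → ℝ → ℝ := fun i t => q i (max (x 0) (min (x N) t)) with hqc_def
  have hclamp : ∀ s ∈ Icc (x 0) (x N), max (x 0) (min (x N) s) = s := by
    intro s hs
    rw [min_eq_right hs.2, max_eq_right hs.1]
  have hqc_eq : ∀ i, ∀ s ∈ Icc (x 0) (x N), qc i s = q i s := by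
    intro i s hs; simp only [hqc_def]; rw [hclamp s hs]
  have hqc_cont : ∀ i, i < N → Continuous (qc i) := by
    intro i hi
    obtain ⟨C, hC⟩ := hq i hi
    have hlip : LipschitzOnWith (Real.toNNReal (max C 0)) (q i) (Icc (x 0) (x N)) := by
      rw [lipschitzOnWith_iff_dist_le_mul]
      intro u hu v hv
      rw [Real.dist_eq, Real.dist_eq, Real.coe_toNNReal _ (le_max_right C 0)]
      calc |q i u - q i v| ≤ C * |u - v| := hC u hu v hv
        _ ≤ max C 0 * |u - v| :=
            mul_le_mul_of_nonneg_right (le_max_left C 0) (abs_nonneg _)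
    have hcl : Continuous fun t : ℝ => max (x 0) (min (x N) t) :=
      continuous_const.max (continuous_const.min continuous_id)
    exact (hlip.continuousOn).comp_continuous hcl
      (fun t => ⟨le_max_left _ _, max_le hx0N (min_le_left _ _)⟩)
  set QQ : ℝ → ℝ := Tmap N x (fun _ => 0) qc (fun _ => 0) with hQQ_def
  have hQQmeas : Measurable QQ := Tmap_measurable (by omega) hqc_cont measurable_const
  have hsN : LmInv x N (N - 1) (x N) = x N := by
    have hNN : N - 1 + 1 = N := by omega
    have hLN : Lm x N (N - 1) (x N) = x N := by rw [Lm_right hx (by omega), hNN]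
    conv_lhs => rw [← hLN]
    rw [LmInv_Lm hx (by omega)]
  have hQQ : ∀ t ∈ Icc (x 0) (x N), Qf t = QQ t := by
    intro t ht
    rcases lt_or_eq_of_le ht.2 with hlt | heq
    · obtain ⟨i0, hi0, h1, h2⟩ := exists_piece N x t ht.1 hlt
      have ht' : t ∈ Ico (x i0) (x (i0 + 1)) := ⟨h1, h2⟩
      have hsIco : LmInv x N i0 t ∈ Ico (x 0) (x N) := LmInv_mem_Ico hx hi0 ht'
      rw [hQQ_def, Tmap_eval hx hi0 ht', hQf i0 hi0 t ht',
        hqc_eq i0 _ ⟨hsIco.1, hsIco.2.le⟩]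
      ring
    · subst heq
      rw [hQQ_def, Tmap_evalN hx (by omega), hQfN, hsN,
        hqc_eq _ _ ⟨hx0N, le_rfl⟩]
      ring
  constructor
  · refine hQQmeas.aemeasurable.congr ?_
    rw [Filter.EventuallyEq, ae_restrict_iff' measurableSet_Icc]
    filter_upwards with t ht
    exact (hQQ t ht).symm
  · have hBi : ∀ i, ∃ B, i < N → ∀ t ∈ Icc (x 0) (x N), |qc i (LmInv x N i t)| ≤ B := by
      intro i
      by_cases hi : i < N
      · obtain ⟨C, hC⟩ := (isCompact_Icc : IsCompact (Icc (x 0) (x N))).exists_bound_of_continuousOn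
          (((hqc_cont i hi).comp (by unfold LmInv; exact (continuous_id.sub continuous_const).div_const _ : Continuous (LmInv x N i))).continuousOn)
        exact ⟨C, fun _ t ht => hC t ht⟩
      · exact ⟨0, fun h => absurd h hi⟩
    choose B hB using hBi
    have hne : (Finset.range N).Nonempty := ⟨0, Finset.mem_range.mpr (by omega)⟩
    refine ⟨(Finset.range N).sup' hne B, ?_⟩
    intro t ht
    rcases lt_or_eq_of_le ht.2 with hlt | heq
    · obtain ⟨i0, hi0, h1, h2⟩ := exists_piece N x t ht.1 hlt
      have ht' : t ∈ Ico (x i0) (x (i0 + 1)) := ⟨h1, h2⟩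
      rw [hQQ t ht, hQQ_def, Tmap_eval hx hi0 ht']
      simp only [zero_mul, mul_zero, zero_add]
      exact (hB i0 hi0 t ht).trans (Finset.le_sup' B (Finset.mem_range.mpr hi0))
    · subst heq
      rw [hQQ _ ht, hQQ_def, Tmap_evalN hx (by omega)]
      simp only [zero_mul, mul_zero, zero_add]
      exact (hB (N - 1) (by omega) _ ht).trans
        (Finset.le_sup' B (Finset.mem_range.mpr (by omega)))

/-- Recursion for the moments `f_m = ∫ x^m f(x) dx` of the bounded fractal function in terms of
the lower moments and the moments of `Q(x) = q i (L i⁻¹ x)` on `I_i`. -/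
theorem stmt13
    (N : ℕ) (hN : 2 ≤ N)
    (x : ℕ → ℝ)
    (hx : ∀ i, i < N → x i < x (i + 1))
    (α : ℕ → ℝ) (hα : ∀ i, i < N → |α i| < 1)
    (q : ℕ → ℝ → ℝ)
    (hq : ∀ i, i < N → ∃ C, ∀ u ∈ Icc (x 0) (x N), ∀ v ∈ Icc (x 0) (x N),
      |q i u - q i v| ≤ C * |u - v|)
    (f : ℝ → ℝ)
    (hfb : ∃ M, ∀ t ∈ Icc (x 0) (x N), |f t| ≤ M)
    (hfe : ∀ i, i < N → ∀ t ∈ Ico (x 0) (x N), f (Lm x N i t) = α i * f t + q i t)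
    (hfeN : f (Lm x N (N - 1) (x N)) = α (N - 1) * f (x N) + q (N - 1) (x N))
    (Qf : ℝ → ℝ)
    (hQf : ∀ i, i < N → ∀ t ∈ Ico (x i) (x (i + 1)), Qf t = q i (LmInv x N i t))
    (hQfN : Qf (x N) = q (N - 1) (LmInv x N (N - 1) (x N))) :
    ∀ m : ℕ, 1 ≤ m →
      (1 - ∑ i ∈ Finset.range N, α i * aC x N i ^ (m + 1)) ≠ 0 ∧
      ∫ t in (x 0)..(x N), t ^ m * f t =
        ((∑ k ∈ Finset.range m, (m.choose k : ℝ) * (∫ t in (x 0)..(x N), t ^ k * f t) *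
            ∑ i ∈ Finset.range N, α i * aC x N i ^ (k + 1) * bC x N i ^ (m - k)) +
          ∫ t in (x 0)..(x N), t ^ m * Qf t) /
        (1 - ∑ i ∈ Finset.range N, α i * aC x N i ^ (m + 1)) := by
  intro m hm
  have hx0N : x 0 < x N := xlt hx (by omega) le_rfl
  have hDpos : 0 < x N - x 0 := hD (by omega) hx
  have hne : (Finset.range N).Nonempty := ⟨0, Finset.mem_range.mpr (by omega)⟩
  -- the denominator
  have hsuma : ∑ i ∈ Finset.range N, aC x N i = 1 := by
    unfold aC
    rw [← Finset.sum_div, Finset.sum_range_sub, div_self hDpos.ne']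
  have habs_lt : |∑ i ∈ Finset.range N, α i * aC x N i ^ (m + 1)| < 1 := by
    calc |∑ i ∈ Finset.range N, α i * aC x N i ^ (m + 1)|
        ≤ ∑ i ∈ Finset.range N, |α i * aC x N i ^ (m + 1)| := Finset.abs_sum_le_sum_abs _ _
      _ < ∑ i ∈ Finset.range N, aC x N i := by
          refine Finset.sum_lt_sum_of_nonempty hne (fun i hi => ?_)
          have hiN : i < N := Finset.mem_range.mp hi
          have ha := aC_pos hx hiN
          have ha1 := aC_le_one hx hiN
          have hle : aC x N i ^ (m + 1) ≤ aC x N i := pow_le_of_le_one ha.le ha1 (by omega)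
          have hpp : 0 < aC x N i ^ (m + 1) := pow_pos ha _
          rw [abs_mul, abs_pow, abs_of_pos ha]
          nlinarith [hα i hiN, abs_nonneg (α i)]
      _ = 1 := hsuma
  have hden : 1 - ∑ i ∈ Finset.range N, α i * aC x N i ^ (m + 1) ≠ 0 :=
    (sub_pos.mpr (abs_lt.mp habs_lt).2).ne'
  refine ⟨hden, ?_⟩
  -- measurability and integrability
  have hfmeas := fractal_aemeasurable N hN x hx α hα q hq f hfb hfe hfeN
  obtain ⟨hQmeas, B, hQb⟩ := Qf_aux N hN x hx q hq Qf hQf hQfN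
  obtain ⟨M0, hM0⟩ := hfb
  set M : ℝ := max M0 0 with hM_def
  have hM : ∀ t ∈ Icc (x 0) (x N), |f t| ≤ M := fun t ht => (hM0 t ht).trans (le_max_left _ _)
  have hsub : ∀ i j, i ≤ j → j ≤ N → uIcc (x i) (x j) ⊆ Icc (x 0) (x N) := by
    intro i j hij hj
    rw [uIcc_of_le (xle hx hij hj)]
    exact Icc_subset_Icc (xle hx (Nat.zero_le i) (hij.trans hj)) (xle hx hj le_rfl)
  have hmul_int : ∀ g : ℝ → ℝ, Continuous g →
      IntegrableOn (fun t => g t * f t) (Icc (x 0) (x N)) volume := by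
    intro g hg
    obtain ⟨C, hC⟩ := isCompact_Icc.exists_bound_of_continuousOn hg.continuousOn
    refine ⟨(hg.aemeasurable.mul hfmeas).aestronglyMeasurable, ?_⟩
    refine HasFiniteIntegral.restrict_of_bounded (C := C * M) measure_Icc_lt_top ?_
    rw [ae_restrict_iff' measurableSet_Icc]
    filter_upwards with t ht
    rw [Real.norm_eq_abs, abs_mul]
    have h1 : |g t| ≤ C := by simpa using hC t ht
    exact mul_le_mul h1 (hM t ht) (abs_nonneg _) ((abs_nonneg _).trans h1)
  have hK : ∀ t ∈ Icc (x 0) (x N), |t| ≤ max |x 0| |x N| := by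
    intro t ht
    rw [abs_le]
    refine ⟨?_, ?_⟩
    · have h1 : -|x 0| ≤ x 0 := neg_abs_le _
      have h2 : -(max |x 0| |x N|) ≤ -|x 0| := neg_le_neg (le_max_left _ _)
      linarith [ht.1]
    · have h1 : x N ≤ |x N| := le_abs_self _
      linarith [ht.2, le_max_right |x 0| |x N|]
  have hQint : IntegrableOn (fun t => t ^ m * Qf t) (Icc (x 0) (x N)) volume := by
    refine ⟨((continuous_pow m).aemeasurable.mul hQmeas).aestronglyMeasurable, ?_⟩
    refine HasFiniteIntegral.restrict_of_bounded (C := (max |x 0| |x N|) ^ m * B)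
      measure_Icc_lt_top ?_
    rw [ae_restrict_iff' measurableSet_Icc]
    filter_upwards with t ht
    rw [Real.norm_eq_abs, abs_mul, abs_pow]
    exact mul_le_mul (pow_le_pow_left₀ (abs_nonneg t) (hK t ht) m) (hQb t ht)
      (abs_nonneg _) (by positivity)
  have hPint : ∀ k : ℕ, IntervalIntegrable (fun s => s ^ k * f s) volume (x 0) (x N) :=
    fun k => ((hmul_int _ (continuous_pow k)).mono_set
      (hsub 0 N (Nat.zero_le N) le_rfl)).intervalIntegrable
  have hqcont : ∀ i, i < N → ContinuousOn (q i) (Icc (x 0) (x N)) := by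
    intro i hi
    obtain ⟨C, hC⟩ := hq i hi
    have hlip : LipschitzOnWith (Real.toNNReal (max C 0)) (q i) (Icc (x 0) (x N)) := by
      rw [lipschitzOnWith_iff_dist_le_mul]
      intro u hu v hv
      rw [Real.dist_eq, Real.dist_eq, Real.coe_toNNReal _ (le_max_right C 0)]
      calc |q i u - q i v| ≤ C * |u - v| := hC u hu v hv
        _ ≤ max C 0 * |u - v| :=
            mul_le_mul_of_nonneg_right (le_max_left C 0) (abs_nonneg _)
    exact hlip.continuousOn
  have hLmCont : ∀ i, Continuous (Lm x N i) := by
    intro i; unfold Lm; exact (continuous_const.mul continuous_id).add continuous_const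
  have hcomp : ∀ i, i < N → ∀ g : ℝ → ℝ,
      ∫ t in (x i)..(x (i + 1)), g t
        = aC x N i * ∫ s in (x 0)..(x N), g (Lm x N i s) := by
    intro i hi g
    have ha : aC x N i ≠ 0 := (aC_pos hx hi).ne'
    have e1 : aC x N i * x 0 + bC x N i = x i := by
      have h := Lm_left hx (show 1 ≤ N by omega) i; rwa [Lm] at h
    have e2 : aC x N i * x N + bC x N i = x (i + 1) := by
      have h := Lm_right hx (show 1 ≤ N by omega) i; rwa [Lm] at h
    have h := intervalIntegral.integral_comp_mul_add (a := x 0) (b := x N) g ha (bC x N i)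
    rw [e1, e2] at h
    have hL : ∀ s, Lm x N i s = aC x N i * s + bC x N i := fun s => rfl
    simp only [hL]
    rw [h, smul_eq_mul, ← mul_assoc, mul_inv_cancel₀ ha, one_mul]
  have hae_ne : ∀ᵐ s : ℝ, s ≠ x N := by
    rw [MeasureTheory.ae_iff]
    simp only [not_not, setOf_eq_eq_singleton]
    exact measure_singleton _
  have hIoc : Set.uIoc (x 0) (x N) = Ioc (x 0) (x N) := uIoc_of_le hx0N.le
  -- per-interval identity
  have keyi : ∀ i, i < N → ∫ t in (x i)..(x (i + 1)), t ^ m * f t =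
      (∑ k ∈ Finset.range (m + 1), (m.choose k : ℝ) * (∫ s in (x 0)..(x N), s ^ k * f s) *
        (α i * aC x N i ^ (k + 1) * bC x N i ^ (m - k))) +
      ∫ t in (x i)..(x (i + 1)), t ^ m * Qf t := by
    intro i hi
    have hQi : ∫ t in (x i)..(x (i + 1)), t ^ m * Qf t
        = aC x N i * ∫ s in (x 0)..(x N), Lm x N i s ^ m * q i s := by
      rw [hcomp i hi (fun t => t ^ m * Qf t)]
      congr 1
      refine intervalIntegral.integral_congr_ae ?_
      filter_upwards [hae_ne] with s hs hmem
      rw [hIoc] at hmem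
      have hsIco : s ∈ Ico (x 0) (x N) := ⟨hmem.1.le, lt_of_le_of_ne hmem.2 hs⟩
      rw [hQf i hi _ (Lm_mem_Ico hx hi hsIco), LmInv_Lm hx hi]
    have hfi : ∫ t in (x i)..(x (i + 1)), t ^ m * f t
        = aC x N i * ∫ s in (x 0)..(x N), Lm x N i s ^ m * (α i * f s + q i s) := by
      rw [hcomp i hi (fun t => t ^ m * f t)]
      congr 1
      refine intervalIntegral.integral_congr_ae ?_
      filter_upwards [hae_ne] with s hs hmem
      rw [hIoc] at hmem
      have hsIco : s ∈ Ico (x 0) (x N) := ⟨hmem.1.le, lt_of_le_of_ne hmem.2 hs⟩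
      rw [hfe i hi s hsIco]
    have hint1 : IntervalIntegrable (fun s => Lm x N i s ^ m * f s) volume (x 0) (x N) :=
      ((hmul_int _ ((hLmCont i).pow m)).mono_set
        (hsub 0 N (Nat.zero_le N) le_rfl)).intervalIntegrable
    have hint2 : IntervalIntegrable (fun s => Lm x N i s ^ m * q i s) volume (x 0) (x N) := by
      refine ContinuousOn.intervalIntegrable ?_
      rw [uIcc_of_le hx0N.le]
      exact (((hLmCont i).pow m).continuousOn).mul (hqcont i hi)
    have hlin : ∫ s in (x 0)..(x N), Lm x N i s ^ m * (α i * f s + q i s)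
        = α i * (∫ s in (x 0)..(x N), Lm x N i s ^ m * f s)
          + ∫ s in (x 0)..(x N), Lm x N i s ^ m * q i s := by
      have e : (fun s => Lm x N i s ^ m * (α i * f s + q i s))
          = fun s => α i * (Lm x N i s ^ m * f s) + Lm x N i s ^ m * q i s := by
        funext s; ring
      rw [e, intervalIntegral.integral_add (hint1.const_mul (α i)) hint2,
        intervalIntegral.integral_const_mul]
    have hbin : ∫ s in (x 0)..(x N), Lm x N i s ^ m * f s
        = ∑ k ∈ Finset.range (m + 1),
            (aC x N i ^ k * bC x N i ^ (m - k) * (m.choose k : ℝ)) *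
              ∫ s in (x 0)..(x N), s ^ k * f s := by
      have e : ∀ s : ℝ, Lm x N i s ^ m * f s = ∑ k ∈ Finset.range (m + 1),
          (aC x N i ^ k * bC x N i ^ (m - k) * (m.choose k : ℝ)) * (s ^ k * f s) := by
        intro s
        rw [Lm, add_pow, Finset.sum_mul]
        refine Finset.sum_congr rfl (fun k hk => ?_)
        rw [mul_pow]
        ring
      simp only [e]
      rw [intervalIntegral.integral_finset_sum (fun k _ => (hPint k).const_mul _)]
      exact Finset.sum_congr rfl fun k _ => intervalIntegral.integral_const_mul _ _
    rw [hfi, hlin, hbin, mul_add, hQi]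
    congr 1
    rw [Finset.mul_sum, Finset.mul_sum]
    refine Finset.sum_congr rfl (fun k hk => ?_)
    ring
  -- summation over the pieces
  have hadj_f : ∀ j, j < N →
      IntervalIntegrable (fun t => t ^ m * f t) volume (x j) (x (j + 1)) :=
    fun j hj => ((hmul_int _ (continuous_pow m)).mono_set
      (hsub j (j + 1) (by omega) hj)).intervalIntegrable
  have hadj_Q : ∀ j, j < N →
      IntervalIntegrable (fun t => t ^ m * Qf t) volume (x j) (x (j + 1)) :=
    fun j hj => (hQint.mono_set (hsub j (j + 1) (by omega) hj)).intervalIntegrable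
  have hsplit_f : ∑ i ∈ Finset.range N, ∫ t in (x i)..(x (i + 1)), t ^ m * f t
      = ∫ t in (x 0)..(x N), t ^ m * f t :=
    intervalIntegral.sum_integral_adjacent_intervals hadj_f
  have hsplit_Q : ∑ i ∈ Finset.range N, ∫ t in (x i)..(x (i + 1)), t ^ m * Qf t
      = ∫ t in (x 0)..(x N), t ^ m * Qf t :=
    intervalIntegral.sum_integral_adjacent_intervals hadj_Q
  have main : ∫ t in (x 0)..(x N), t ^ m * f t
      = (∑ k ∈ Finset.range (m + 1), (m.choose k : ℝ) *
          (∫ s in (x 0)..(x N), s ^ k * f s) *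
          ∑ i ∈ Finset.range N, α i * aC x N i ^ (k + 1) * bC x N i ^ (m - k))
        + ∫ t in (x 0)..(x N), t ^ m * Qf t := by
    rw [← hsplit_f, ← hsplit_Q]
    rw [Finset.sum_congr rfl (fun i hi => keyi i (Finset.mem_range.mp hi))]
    rw [Finset.sum_add_distrib]
    congr 1
    rw [Finset.sum_comm]
    refine Finset.sum_congr rfl (fun k hk => ?_)
    exact (Finset.mul_sum _ _ _).symm
  rw [Finset.sum_range_succ] at main
  have hterm : (m.choose m : ℝ) * (∫ s in (x 0)..(x N), s ^ m * f s) *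
      ∑ i ∈ Finset.range N, α i * aC x N i ^ (m + 1) * bC x N i ^ (m - m)
      = (∫ s in (x 0)..(x N), s ^ m * f s) *
        ∑ i ∈ Finset.range N, α i * aC x N i ^ (m + 1) := by
    rw [Nat.choose_self, Nat.sub_self]
    push_cast
    rw [one_mul]
    congr 1
    exact Finset.sum_congr rfl fun i _ => by rw [pow_zero, mul_one]
  rw [hterm] at main
  rw [eq_div_iff hden]
  linear_combination main
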